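/- Let E be a finite-dimensional normed space, B : E → E an invertible linear map admitting a B-invariant splitting E = E^s ⊕ E^u with ‖B|_{E^s}‖ ≤ μ < 1 and ‖B^{-1}|_{E^u}‖ ≤ μ < 1. Let A : X → X be a bijection of a set X and φ : X → E a bounded function. Then there exists a unique bounded function ψ : X → E with ψ(A x) − B(ψ(x)) = φ(x) for all x ∈ X. Moreover, if X is a compact metric space, A is a homeomorphism, and φ is continuous, then ψ is continuous. -/

import Mathlib

open BoundedContinuousFunction Function Submodule

set_option maxHeartbeats 1000000 in
theorem key10 {E : Type*} [NormedAddCommGroup E] [NormedSpace ℝ E] [FiniteDimensional ℝ E]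
    (B : E ≃L[ℝ] E) (Es Eu : Submodule ℝ E) (hcompl : IsCompl Es Eu)
    (hBs : ∀ v ∈ Es, B v ∈ Es) (hBu : ∀ v ∈ Eu, B v ∈ Eu)
    (μ : ℝ) (hμ0 : 0 ≤ μ) (hμ1 : μ < 1)
    (hs : ∀ v ∈ Es, ‖B v‖ ≤ μ * ‖v‖) (hu : ∀ v ∈ Eu, ‖B.symm v‖ ≤ μ * ‖v‖)
    {X : Type*} [TopologicalSpace X] (A : X ≃ X) (hA : Continuous A) (hA' : Continuous A.symm)
    (φ : X → E) (hφc : Continuous φ) (Cφ : ℝ) (hφ : ∀ x, ‖φ x‖ ≤ Cφ) :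
    ∃ ψ : X → E, Continuous ψ ∧ (∃ Cψ, ∀ x, ‖ψ x‖ ≤ Cψ) ∧ (∀ x, ψ (A x) - B (ψ x) = φ x) ∧
      ∀ ψ' : X → E, Continuous ψ' → (∃ C, ∀ x, ‖ψ' x‖ ≤ C) →
        (∀ x, ψ' (A x) - B (ψ' x) = φ x) → ψ' = ψ := by
  classical
  -- B.symm preserves Eu
  have hB'u : ∀ v ∈ Eu, B.symm v ∈ Eu := by
    have hinj : Injective (((B : E →L[ℝ] E) : E →ₗ[ℝ] E).restrict hBu) := by
      intro a b hab
      have : B (a : E) = B b := by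
        have := congrArg (Subtype.val) hab
        simpa [LinearMap.restrict_coe_apply] using this
      exact Subtype.ext (B.injective this)
    have hsurj := (LinearMap.injective_iff_surjective).mp hinj
    intro v hv
    obtain ⟨w, hw⟩ := hsurj ⟨v, hv⟩
    have : B (w : E) = v := by
      have := congrArg (Subtype.val) hw
      simpa [LinearMap.restrict_coe_apply] using this
    have : (B.symm v : E) = w := by
      rw [← this]; exact B.symm_apply_apply _
    rw [this]; exact w.2
  set Ps : E →L[ℝ] Es := LinearMap.toContinuousLinearMap (Es.linearProjOfIsCompl Eu hcompl)
    with hPs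
  set Pu : E →L[ℝ] Eu := LinearMap.toContinuousLinearMap (Eu.linearProjOfIsCompl Es hcompl.symm)
    with hPu
  have hPsl : ∀ v : Es, Ps (v : E) = v := fun v => linearProjOfIsCompl_apply_left hcompl v
  have hPsr : ∀ v ∈ Eu, Ps v = 0 := fun v hv => projectionOnto_apply_of_mem_right hcompl hv
  have hPul : ∀ v : Eu, Pu (v : E) = v := fun v => linearProjOfIsCompl_apply_left hcompl.symm v
  have hPur : ∀ v ∈ Es, Pu v = 0 := fun v hv => projectionOnto_apply_of_mem_right hcompl.symm hv
  have hsum : ∀ v : E, (Ps v : E) + (Pu v : E) = v := fun v =>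
    projection_add_projection_eq_self hcompl v
  set Bs : Es →L[ℝ] Es :=
    LinearMap.toContinuousLinearMap (((B : E →L[ℝ] E) : E →ₗ[ℝ] E).restrict hBs) with hBsdef
  set Bu : Eu →L[ℝ] Eu :=
    LinearMap.toContinuousLinearMap (((B.symm : E →L[ℝ] E) : E →ₗ[ℝ] E).restrict hB'u)
    with hBudef
  have hBs_coe : ∀ v : Es, (Bs v : E) = B (v : E) := fun v => rfl
  have hBu_coe : ∀ v : Eu, (Bu v : E) = B.symm (v : E) := fun v => rfl
  -- commutation of projections with B
  have hcomm_s : ∀ v : E, Ps (B v) = Bs (Ps v) := by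
    intro v
    conv_lhs => rw [← hsum v]
    rw [map_add, map_add]
    have h1 : Ps (B (Ps v : E)) = ⟨B (Ps v : E), hBs _ (Ps v).2⟩ :=
      hPsl ⟨B (Ps v : E), hBs _ (Ps v).2⟩
    have h2 : Ps (B (Pu v : E)) = 0 := hPsr _ (hBu _ (Pu v).2)
    rw [h1, h2, add_zero]
    exact Subtype.ext rfl
  have hcomm_u : ∀ v : E, Pu (B v) = ⟨B (Pu v : E), hBu _ (Pu v).2⟩ := by
    intro v
    conv_lhs => rw [← hsum v]
    rw [map_add, map_add]
    have h1 : Pu (B (Ps v : E)) = 0 := hPur _ (hBs _ (Ps v).2)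
    have h2 : Pu (B (Pu v : E)) = ⟨B (Pu v : E), hBu _ (Pu v).2⟩ :=
      hPul ⟨B (Pu v : E), hBu _ (Pu v).2⟩
    rw [h1, h2, zero_add]
  -- bounded continuous data
  set Φ : X →ᵇ E := ofNormedAddCommGroup φ hφc Cφ hφ with hΦ
  set Φs : X →ᵇ Es := Ps.compLeftContinuousBounded X Φ with hΦs
  set Φu : X →ᵇ Eu := Pu.compLeftContinuousBounded X Φ with hΦu
  set Am : C(X, X) := ⟨A, hA⟩ with hAm
  set Am' : C(X, X) := ⟨A.symm, hA'⟩ with hAm'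
  set Ts : (X →ᵇ Es) → (X →ᵇ Es) :=
    fun f => (Bs.compLeftContinuousBounded X f + Φs).compContinuous Am' with hTsdef
  set Tu : (X →ᵇ Eu) → (X →ᵇ Eu) :=
    fun f => Bu.compLeftContinuousBounded X (f.compContinuous Am - Φu) with hTudef
  have hTs_apply : ∀ f x, Ts f x = Bs (f (A.symm x)) + Φs (A.symm x) := fun f x => rfl
  have hTu_apply : ∀ f x, Tu f x = Bu (f (A x) - Φu x) := fun f x => rfl
  have hK1 : (⟨μ, hμ0⟩ : NNReal) < 1 := by exact_mod_cast hμ1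
  have hTs_c : ContractingWith ⟨μ, hμ0⟩ Ts := by
    refine ⟨hK1, LipschitzWith.of_dist_le_mul fun f g => ?_⟩
    refine (dist_le (by positivity)).2 fun x => ?_
    rw [hTs_apply, hTs_apply, dist_add_right, dist_eq_norm, ← map_sub]
    calc ‖Bs (f (A.symm x) - g (A.symm x))‖
        = ‖B ((f (A.symm x) - g (A.symm x) : Es) : E)‖ := by
          rw [← hBs_coe, Submodule.coe_norm]
      _ ≤ μ * ‖((f (A.symm x) - g (A.symm x) : Es) : E)‖ := hs _ (f (A.symm x) - g (A.symm x)).2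
      _ = μ * ‖f (A.symm x) - g (A.symm x)‖ := by rw [Submodule.coe_norm]
      _ ≤ μ * dist f g := by
          refine mul_le_mul_of_nonneg_left ?_ hμ0
          rw [← dist_eq_norm]
          exact dist_coe_le_dist _
  have hTu_c : ContractingWith ⟨μ, hμ0⟩ Tu := by
    refine ⟨hK1, LipschitzWith.of_dist_le_mul fun f g => ?_⟩
    refine (dist_le (by positivity)).2 fun x => ?_
    rw [hTu_apply, hTu_apply, dist_eq_norm, ← map_sub, sub_sub_sub_cancel_right]
    calc ‖Bu (f (A x) - g (A x))‖
        = ‖B.symm ((f (A x) - g (A x) : Eu) : E)‖ := by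
          rw [← hBu_coe, Submodule.coe_norm]
      _ ≤ μ * ‖((f (A x) - g (A x) : Eu) : E)‖ := hu _ (f (A x) - g (A x)).2
      _ = μ * ‖f (A x) - g (A x)‖ := by rw [Submodule.coe_norm]
      _ ≤ μ * dist f g := by
          refine mul_le_mul_of_nonneg_left ?_ hμ0
          rw [← dist_eq_norm]
          exact dist_coe_le_dist _
  set ψs : X →ᵇ Es := hTs_c.fixedPoint Ts with hψs
  set ψu : X →ᵇ Eu := hTu_c.fixedPoint Tu with hψu
  have hψs_fix : Ts ψs = ψs := hTs_c.fixedPoint_isFixedPt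
  have hψu_fix : Tu ψu = ψu := hTu_c.fixedPoint_isFixedPt
  refine ⟨fun x => (ψs x : E) + (ψu x : E), ?_, ?_, ?_, ?_⟩
  · exact ((continuous_subtype_val.comp ψs.continuous).add
      (continuous_subtype_val.comp ψu.continuous))
  · exact ⟨‖ψs‖ + ‖ψu‖, fun x => (norm_add_le _ _).trans
      (add_le_add (ψs.norm_coe_le_norm x) (ψu.norm_coe_le_norm x))⟩
  · intro x
    have h1 : ψs (A x) = Bs (ψs x) + Φs x := by
      conv_lhs => rw [← hψs_fix]
      rw [hTs_apply]
      simp [A.symm_apply_apply]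
    have h2 : ψu x = Bu (ψu (A x) - Φu x) := by
      conv_lhs => rw [← hψu_fix]
      rw [hTu_apply]
    have h2' : B ((ψu x : E)) = (ψu (A x) : E) - (Φu x : E) := by
      rw [h2, hBu_coe]
      push_cast
      rw [B.apply_symm_apply]
    have hφx : ((Φs x : E)) + (Φu x : E) = φ x := hsum (φ x)
    have h1' : (ψs (A x) : E) = B (ψs x) + (Φs x : E) := by
      rw [h1, Submodule.coe_add, hBs_coe]
    calc (ψs (A x) : E) + (ψu (A x) : E) - B ((ψs x : E) + (ψu x : E))
        = (ψs (A x) : E) + (ψu (A x) : E) - B (ψs x) - B (ψu x) := by rw [map_add]; abel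
      _ = (Φs x : E) + (Φu x : E) := by rw [h1', h2']; abel
      _ = φ x := hφx
  · intro ψ' hc ⟨C, hC⟩ heq
    set Ψ' : X →ᵇ E := ofNormedAddCommGroup ψ' hc C hC with hΨ'
    have heq' : ∀ x, ψ' x = B (ψ' (A.symm x)) + φ (A.symm x) := by
      intro x
      have := heq (A.symm x)
      rw [A.apply_symm_apply] at this
      rw [← this]; abel
    have e : ∀ y, (Ps.compLeftContinuousBounded X Ψ') y = Ps (ψ' y) := fun y => by
      rw [ContinuousLinearMap.compLeftContinuousBounded_apply]; rfl
    have e' : ∀ y, (Pu.compLeftContinuousBounded X Ψ') y = Pu (ψ' y) := fun y => by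
      rw [ContinuousLinearMap.compLeftContinuousBounded_apply]; rfl
    have eφ : ∀ y, Φs y = Ps (φ y) := fun y => by
      rw [hΦs, ContinuousLinearMap.compLeftContinuousBounded_apply]; rfl
    have eφ' : ∀ y, Φu y = Pu (φ y) := fun y => by
      rw [hΦu, ContinuousLinearMap.compLeftContinuousBounded_apply]; rfl
    have hfs : IsFixedPt Ts (Ps.compLeftContinuousBounded X Ψ') := by
      refine DFunLike.ext _ _ fun x => ?_
      rw [hTs_apply, e, e, eφ, heq' x, map_add, hcomm_s]
    have hfu : IsFixedPt Tu (Pu.compLeftContinuousBounded X Ψ') := by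
      refine DFunLike.ext _ _ fun x => ?_
      rw [hTu_apply, e', e', eφ']
      have h3 : ψ' (A x) = B (ψ' x) + φ x := by rw [← heq x]; abel
      rw [h3, map_add, hcomm_u, add_sub_cancel_right]
      apply Subtype.ext
      rw [hBu_coe]
      exact B.symm_apply_apply _
    have e1 : Ps.compLeftContinuousBounded X Ψ' = ψs := hTs_c.fixedPoint_unique hfs
    have e2 : Pu.compLeftContinuousBounded X Ψ' = ψu := hTu_c.fixedPoint_unique hfu
    funext x
    have := hsum (ψ' x)
    rw [← this]
    have ex1 : Ps (ψ' x) = ψs x := by rw [← e1]; exact (e x).symm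
    have ex2 : Pu (ψ' x) = ψu x := by rw [← e2]; exact (e' x).symm
    rw [ex1, ex2]

/-- Twisted cohomological equation with hyperbolic twist: if `B` is an invertible linear map of a
finite-dimensional normed space with invariant splitting `E = Es ⊕ Eu`, contracting by `μ < 1`
on `Es` and with `B⁻¹` contracting by `μ < 1` on `Eu`, `A : X ≃ X` is a bijection and `φ`
is bounded, then there is a unique bounded `ψ` with `ψ(Ax) − B(ψ x) = φ x`; moreover if `X` is a
compact metrizable space, `A` a homeomorphism and `φ` continuous, then any such bounded solution
is continuous. -/
theorem stmt10 {E : Type*} [NormedAddCommGroup E] [NormedSpace ℝ E] [FiniteDimensional ℝ E]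
    (B : E ≃L[ℝ] E) (Es Eu : Submodule ℝ E) (hcompl : IsCompl Es Eu)
    (hBs : ∀ v ∈ Es, B v ∈ Es) (hBu : ∀ v ∈ Eu, B v ∈ Eu)
    (μ : ℝ) (hμ0 : 0 < μ) (hμ1 : μ < 1)
    (hs : ∀ v ∈ Es, ‖B v‖ ≤ μ * ‖v‖) (hu : ∀ v ∈ Eu, ‖B.symm v‖ ≤ μ * ‖v‖)
    {X : Type*} (A : X ≃ X) (φ : X → E) (hφ : ∃ Cφ, ∀ x, ‖φ x‖ ≤ Cφ) :
    (∃! ψ : X → E, (∃ Cψ, ∀ x, ‖ψ x‖ ≤ Cψ) ∧ ∀ x, ψ (A x) - B (ψ x) = φ x) ∧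
    (∀ (tX : TopologicalSpace X), @TopologicalSpace.MetrizableSpace X tX → @CompactSpace X tX →
      @Continuous X X tX tX A → @Continuous X X tX tX A.symm →
      @Continuous X E tX _ φ →
      ∀ ψ : X → E, (∃ Cψ, ∀ x, ‖ψ x‖ ≤ Cψ) → (∀ x, ψ (A x) - B (ψ x) = φ x) →
        @Continuous X E tX _ ψ) := by
  obtain ⟨Cφ, hCφ⟩ := hφ
  obtain ⟨ψ₀, -, hb₀, he₀, hu₀⟩ :=
    @key10 E _ _ _ B Es Eu hcompl hBs hBu μ hμ0.le hμ1 hs hu X ⊥ A continuous_bot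
      continuous_bot φ continuous_bot Cφ hCφ
  constructor
  · refine ⟨ψ₀, ⟨hb₀, he₀⟩, ?_⟩
    rintro ψ' ⟨hb', he'⟩
    exact hu₀ ψ' continuous_bot hb' he'
  · intro tX _ _ hA hA' hφc ψ' hb' he'
    letI := tX
    obtain ⟨ψc, hcc, hbc, hec, -⟩ :=
      key10 B Es Eu hcompl hBs hBu μ hμ0.le hμ1 hs hu A hA hA' φ hφc Cφ hCφ
    have h1 : ψ' = ψ₀ := hu₀ ψ' (continuous_bot : @Continuous X E ⊥ _ ψ') hb' he'
    have h2 : ψc = ψ₀ := hu₀ ψc (continuous_bot : @Continuous X E ⊥ _ ψc) hbc hec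
    rw [h1, ← h2]
    exact hcc
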